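/- Let ε > 0 and δ > 0. In the extended Prisoner's Dilemma game with an 'extrovert' player 1 and an 'introvert' player 2 specified below, the mixed-strategy profile in which player 1 plays H_alone and H_together with probability 1/2 each and player 2 plays the pure strategy H_alone is a Nash equilibrium; under this profile the coalition {1,2} forms with probability 0 (the realized coalition structure is {{1},{2}} with probability 1), player 1's expected payoff is −2, and player 2's expected payoff is −2+δ. -/

import Mathlib

/-- The four pure strategies: Low/High activity, alone/together. -/
inductive S4 where
  | La  -- L_alone
  | Ha  -- H_alone
  | Lt  -- L_together
  | Ht  -- H_together
deriving DecidableEq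

instance : Fintype S4 where
  elems := {S4.La, S4.Ha, S4.Lt, S4.Ht}
  complete := by intro x; cases x <;> simp

open S4

/-- Whether a strategy is an H-strategy. -/
def high : S4 → Bool
  | Ha => true
  | Ht => true
  | _ => false

/-- Whether a strategy is a 'together' strategy. -/
def tog : S4 → Bool
  | Lt => true
  | Ht => true
  | _ => false

/-- Prisoner's Dilemma base payoff in L/H components. -/
def pdBase (mine other : Bool) : ℝ :=
  if mine then (if other then -2 else 3) else (if other then -5 else 0)

/-- Player 1 ('extrovert'): base payoff plus `ε` if the coalition `{1,2}`
forms, i.e. both chose a 'together' strategy. -/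
def u1 (ε : ℝ) (s1 s2 : S4) : ℝ :=
  pdBase (high s1) (high s2) + (if tog s1 = true ∧ tog s2 = true then ε else 0)

/-- Player 2 ('introvert'): base payoff plus `δ` if the coalition `{1,2}`
does not form. -/
def u2 (δ : ℝ) (s1 s2 : S4) : ℝ :=
  pdBase (high s2) (high s1) + (if ¬ (tog s1 = true ∧ tog s2 = true) then δ else 0)

/-- A mixed strategy: a probability vector over the four pure strategies. -/
def IsMix (σ : S4 → ℝ) : Prop := (∀ a, 0 ≤ σ a) ∧ (∑ a, σ a) = 1

/-- Expected payoff under the product distribution. -/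
noncomputable def EU (u : S4 → S4 → ℝ) (σ1 σ2 : S4 → ℝ) : ℝ :=
  ∑ a, ∑ b, u a b * σ1 a * σ2 b

/-- Player 1's equilibrium mixed strategy: `H_alone` and `H_together` with
probability `1/2` each. -/
noncomputable def σ1star : S4 → ℝ
  | Ha => 1 / 2
  | Ht => 1 / 2
  | _ => 0

/-- Player 2's equilibrium (pure) strategy: `H_alone` with probability 1. -/
noncomputable def σ2star : S4 → ℝ
  | Ha => 1
  | _ => 0

theorem sumS4 (f : S4 → ℝ) : ∑ a, f a = f La + f Ha + f Lt + f Ht := by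
  show Finset.sum _ f = _
  rw [show (Finset.univ : Finset S4) = {La, Ha, Lt, Ht} from rfl]
  simp [Finset.sum_insert, Finset.mem_insert]
  ring

/-- For `ε, δ > 0`, in the mixed extrovert/introvert extended Prisoner's
Dilemma, the profile where player 1 mixes `H_alone`/`H_together` with equal
probabilities and player 2 plays `H_alone` is a Nash equilibrium; the coalition
`{1,2}` forms with probability 0, player 1's expected payoff is `-2`, and
player 2's expected payoff is `-2+δ`. -/
theorem mixed_extrovert_introvert_equilibrium (ε δ : ℝ) (hε : 0 < ε) (hδ : 0 < δ) :
    IsMix σ1star ∧ IsMix σ2star ∧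
    (∀ τ, IsMix τ → EU (u1 ε) τ σ2star ≤ EU (u1 ε) σ1star σ2star) ∧
    (∀ τ, IsMix τ → EU (u2 δ) σ1star τ ≤ EU (u2 δ) σ1star σ2star) ∧
    (∑ a, ∑ b, (if tog a = true ∧ tog b = true then σ1star a * σ2star b else 0)) = 0 ∧
    EU (u1 ε) σ1star σ2star = -2 ∧
    EU (u2 δ) σ1star σ2star = -2 + δ  := by
  have hEU1 : ∀ τ : S4 → ℝ, EU (u1 ε) τ σ2star =
      (-5) * τ La + (-2) * τ Ha + (-5) * τ Lt + (-2) * τ Ht := by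
    intro τ
    simp only [EU, sumS4, u1, pdBase, σ2star, high, tog]
    norm_num
  have hEU2 : ∀ τ : S4 → ℝ, EU (u2 δ) σ1star τ =
      (-5 + δ) * τ La + (-2 + δ) * τ Ha + (-5 + δ/2) * τ Lt + (-2 + δ/2) * τ Ht := by
    intro τ
    simp only [EU, sumS4, u2, pdBase, σ1star, σ2star, high, tog]
    norm_num
    ring
  refine ⟨⟨fun a => by cases a <;> simp [σ1star], by rw [sumS4]; simp [σ1star]; norm_num⟩,
    ⟨fun a => by cases a <;> simp [σ2star], by rw [sumS4]; simp [σ2star]⟩, ?_, ?_, ?_, ?_, ?_⟩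
  · intro τ ⟨hpos, hsum⟩
    rw [hEU1 τ, hEU1 σ1star]
    rw [sumS4] at hsum
    have h1 := hpos La; have h2 := hpos Ha; have h3 := hpos Lt; have h4 := hpos Ht
    simp only [σ1star]
    nlinarith
  · intro τ ⟨hpos, hsum⟩
    rw [hEU2 τ, hEU2 σ2star]
    rw [sumS4] at hsum
    have h1 := hpos La; have h2 := hpos Ha; have h3 := hpos Lt; have h4 := hpos Ht
    simp only [σ2star]
    nlinarith
  · rw [sumS4]
    simp [sumS4, σ1star, σ2star, tog]
  · rw [hEU1 σ1star]; simp [σ1star]; ring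
  · rw [hEU2 σ2star]; simp [σ2star]
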